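/- Let K be a field of characteristic different from 2, let d ∈ K be nonzero, and let L := K[X]/(X² − d), a 2-dimensional commutative K-algebra with basis (1, s) where s is the class of X (so s² = d). Let a = a₀·1 + a₁·s be a unit of L, with a₀, a₁ ∈ K, and let q_a be the quadratic form on the 2-dimensional K-vector space L defined by q_a(x) = Tr_{L/K}(a·x²), where Tr_{L/K} is the algebra trace. Then: (i) if a₀ = 0, the form q_a is hyperbolic, i.e. equivalent to the diagonal quadratic form ⟨1, −1⟩; (ii) if a₀ ≠ 0, the form q_a is equivalent to the diagonal quadratic form ⟨2a₀, 2a₀·d·(a₀² − d·a₁²)⟩. -/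

import Mathlib

open Polynomial

/-- The quadratic form `x ↦ Tr_{L/K}(a · x²)` on a commutative `K`-algebra `L`,
where `Tr_{L/K}` is the algebra trace. -/
noncomputable def traceQF (K : Type*) [Field K] {L : Type*} [CommRing L] [Algebra K L]
    (a : L) : QuadraticForm K L :=
  LinearMap.BilinMap.toQuadraticMap
  (LinearMap.mk₂ K (fun x y => Algebra.trace K L (a * x * y))
    (fun x x' y => show Algebra.trace K L (a * (x + x') * y) = _ by
      rw [show a * (x + x') * y = a * x * y + a * x' * y by ring, map_add])
    (fun c x y => show Algebra.trace K L (a * (c • x) * y) = _ by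
      rw [show a * (c • x) * y = c • (a * x * y) by
        rw [mul_smul_comm, smul_mul_assoc], map_smul])
    (fun x y y' => show Algebra.trace K L (a * x * (y + y')) = _ by
      rw [show a * x * (y + y') = a * x * y + a * x * y' by ring, map_add])
    (fun c x y => show Algebra.trace K L (a * x * (c • y)) = _ by
      rw [mul_smul_comm c (a * x) y, map_smul]))

/-- The quadratic étale algebra `L = K[X]/(X² - d)`, a 2-dimensional commutative
`K`-algebra with basis `(1, s)` where `s` is the class of `X` (so `s² = d`). -/
abbrev QuadAlg (K : Type*) [Field K] (d : K) : Type _ := AdjoinRoot (X ^ 2 - C d)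

section Aux

variable {K : Type*} [Field K]

private lemma QA.monic (d : K) : (X ^ 2 - C d : K[X]).Monic :=
  monic_X_pow_sub_C d two_ne_zero

/-- The basis `(1, s)` of `QuadAlg K d`. -/
noncomputable def QAbasis (K : Type*) [Field K] (d : K) :
    Module.Basis (Fin 2) K (AdjoinRoot (X ^ 2 - C d)) :=
  ((AdjoinRoot.powerBasis (f := X ^ 2 - C d) (QA.monic d).ne_zero).basis).reindex
    (finCongr (by rw [AdjoinRoot.powerBasis_dim, natDegree_X_pow_sub_C]))

lemma QAbasis_apply (d : K) (i : Fin 2) :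
    QAbasis K d i = AdjoinRoot.root (X ^ 2 - C d) ^ (i : ℕ) := by
  rw [QAbasis, Module.Basis.reindex_apply, PowerBasis.basis_eq_pow, AdjoinRoot.powerBasis_gen]
  congr 1

lemma QAbasis_zero (d : K) : QAbasis K d 0 = 1 := by
  rw [QAbasis_apply]; simp

lemma QAbasis_one (d : K) : QAbasis K d 1 = AdjoinRoot.root (X ^ 2 - C d) := by
  rw [QAbasis_apply]; simp

lemma QA.root_sq (d : K) :
    AdjoinRoot.root (X ^ 2 - C d) ^ 2 = algebraMap K _ d := by
  have h := AdjoinRoot.aeval_eq (f := X ^ 2 - C d) (X ^ 2 - C d)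
  rw [AdjoinRoot.mk_self, map_sub, map_pow, aeval_X, aeval_C, sub_eq_zero] at h
  exact h

lemma QA.repr_apply (d : K) (c₀ c₁ : K) (i : Fin 2) :
    (QAbasis K d).repr (algebraMap K (AdjoinRoot (X ^ 2 - C d)) c₀ +
      c₁ • AdjoinRoot.root (X ^ 2 - C d)) i = ![c₀, c₁] i := by
  have h : algebraMap K (AdjoinRoot (X ^ 2 - C d)) c₀ +
      c₁ • AdjoinRoot.root (X ^ 2 - C d)
      = c₀ • QAbasis K d 0 + c₁ • QAbasis K d 1 := by
    rw [QAbasis_zero, QAbasis_one, Algebra.algebraMap_eq_smul_one]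
  rw [h, map_add, map_smul, map_smul, Module.Basis.repr_self, Module.Basis.repr_self]
  fin_cases i <;> simp

lemma QA.expand (d : K) (x : AdjoinRoot (X ^ 2 - C d)) :
    x = algebraMap K (AdjoinRoot (X ^ 2 - C d)) ((QAbasis K d).repr x 0) +
      ((QAbasis K d).repr x 1) • AdjoinRoot.root (X ^ 2 - C d) := by
  conv_lhs => rw [← (QAbasis K d).sum_repr x]
  rw [Fin.sum_univ_two, QAbasis_zero, QAbasis_one, Algebra.algebraMap_eq_smul_one]

lemma QA.trace_root (d : K) :
    Algebra.trace K (AdjoinRoot (X ^ 2 - C d)) (AdjoinRoot.root (X ^ 2 - C d)) = 0 := by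
  rw [Algebra.trace_eq_matrix_trace (QAbasis K d), Matrix.trace, Fin.sum_univ_two]
  have h0 : Algebra.leftMulMatrix (QAbasis K d) (AdjoinRoot.root (X ^ 2 - C d)) 0 0 = 0 := by
    rw [Algebra.leftMulMatrix_eq_repr_mul, QAbasis_zero, mul_one, ← QAbasis_one,
      Module.Basis.repr_self]
    simp
  have h1 : Algebra.leftMulMatrix (QAbasis K d) (AdjoinRoot.root (X ^ 2 - C d)) 1 1 = 0 := by
    rw [Algebra.leftMulMatrix_eq_repr_mul, QAbasis_one, ← pow_two, QA.root_sq,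
      show algebraMap K (AdjoinRoot (X ^ 2 - C d)) d = d • QAbasis K d 0 by
        rw [QAbasis_zero, Algebra.algebraMap_eq_smul_one],
      map_smul, Module.Basis.repr_self]
    simp
  rw [Matrix.diag_apply, Matrix.diag_apply, h0, h1, add_zero]

lemma QA.trace_mk (d : K) (c₀ c₁ : K) :
    Algebra.trace K (AdjoinRoot (X ^ 2 - C d))
      (algebraMap K (AdjoinRoot (X ^ 2 - C d)) c₀ +
        c₁ • AdjoinRoot.root (X ^ 2 - C d)) = 2 * c₀ := by
  rw [map_add, map_smul, QA.trace_root, Algebra.trace_algebraMap_of_basis (QAbasis K d)]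
  simp [mul_comm]

lemma traceQF_mk (d a₀ a₁ x₀ x₁ : K) :
    traceQF K (algebraMap K (AdjoinRoot (X ^ 2 - C d)) a₀ +
        a₁ • AdjoinRoot.root (X ^ 2 - C d))
      (algebraMap K (AdjoinRoot (X ^ 2 - C d)) x₀ + x₁ • AdjoinRoot.root (X ^ 2 - C d))
      = 2 * a₀ * x₀ ^ 2 + 4 * a₁ * d * x₀ * x₁ + 2 * a₀ * d * x₁ ^ 2 := by
  set s := AdjoinRoot.root (X ^ 2 - C d) with hs_def
  set A := algebraMap K (AdjoinRoot (X ^ 2 - C d)) a₀ + a₁ • s with hA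
  set x := algebraMap K (AdjoinRoot (X ^ 2 - C d)) x₀ + x₁ • s with hx
  have step : traceQF K A x = Algebra.trace K (AdjoinRoot (X ^ 2 - C d)) (A * x * x) := rfl
  have hs : s ^ 2 = algebraMap K (AdjoinRoot (X ^ 2 - C d)) d := QA.root_sq d
  have key : A * x * x =
      algebraMap K (AdjoinRoot (X ^ 2 - C d))
        (a₀ * x₀ ^ 2 + d * (2 * a₁ * x₀ * x₁ + a₀ * x₁ ^ 2)) +
      (a₁ * x₀ ^ 2 + 2 * a₀ * x₀ * x₁ + d * a₁ * x₁ ^ 2) • s := by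
    rw [hA, hx]
    simp only [Algebra.smul_def, map_add, map_mul, map_pow, map_ofNat]
    linear_combination (2 * algebraMap K (AdjoinRoot (X ^ 2 - C d)) a₁ *
        algebraMap K (AdjoinRoot (X ^ 2 - C d)) x₀ *
        algebraMap K (AdjoinRoot (X ^ 2 - C d)) x₁ +
      algebraMap K (AdjoinRoot (X ^ 2 - C d)) a₀ *
        algebraMap K (AdjoinRoot (X ^ 2 - C d)) x₁ ^ 2 +
      algebraMap K (AdjoinRoot (X ^ 2 - C d)) a₁ *
        algebraMap K (AdjoinRoot (X ^ 2 - C d)) x₁ ^ 2 * s) * hs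
  rw [step, key, QA.trace_mk]
  ring

/-- An explicit invertible 2×2 matrix as a linear equivalence of `Fin 2 → K`. -/
noncomputable def mat2Equiv (p q r t : K)
    (hdet : p * t - q * r ≠ 0) : (Fin 2 → K) ≃ₗ[K] (Fin 2 → K) where
  toFun w := ![p * w 0 + q * w 1, r * w 0 + t * w 1]
  map_add' w v := by
    funext i; fin_cases i <;> simp [Pi.add_apply] <;> ring
  map_smul' c w := by
    funext i; fin_cases i <;> simp [Pi.smul_apply, smul_eq_mul] <;> ring
  invFun w := ![(t * w 0 - q * w 1) / (p * t - q * r),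
    (-r * w 0 + p * w 1) / (p * t - q * r)]
  left_inv w := by
    funext i; fin_cases i <;>
      (simp only [Fin.zero_eta, Fin.mk_one, Matrix.cons_val_zero, Matrix.cons_val_one, Matrix.head_cons]) <;>
      (rw [div_eq_iff hdet]; ring)
  right_inv w := by
    funext i; fin_cases i <;>
      (simp only [Fin.zero_eta, Fin.mk_one, Matrix.cons_val_zero, Matrix.cons_val_one, Matrix.head_cons]) <;>
      (rw [← mul_div_assoc, ← mul_div_assoc, ← add_div, div_eq_iff hdet]; ring)

lemma mat2Equiv_apply (p q r t : K) (h : p * t - q * r ≠ 0)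
    (w : Fin 2 → K) : mat2Equiv p q r t h w = ![p * w 0 + q * w 1, r * w 0 + t * w 1] := rfl

end Aux

/-- Computation of the transfer `(Tr_{L/K})₊⟨a⟩` of a rank-one form along the quadratic
étale algebra `L = K[X]/(X² - d)`: for a unit `a = a₀·1 + a₁·s` of `L`, the quadratic form
`q_a(x) = Tr_{L/K}(a·x²)` is hyperbolic (equivalent to `⟨1, -1⟩`) if `a₀ = 0`, and is
equivalent to the diagonal form `⟨2a₀, 2a₀·d·(a₀² - d·a₁²)⟩` if `a₀ ≠ 0`. -/
theorem traceQF_quadAlg_equivalent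
    (K : Type*) [Field K] (hK : (2 : K) ≠ 0) (d : K) (hd : d ≠ 0)
    (a : QuadAlg K d) (ha : IsUnit a) (a₀ a₁ : K)
    (haeq : a = algebraMap K (QuadAlg K d) a₀ + a₁ • AdjoinRoot.root (X ^ 2 - C d)) :
    (a₀ = 0 →
      QuadraticMap.Equivalent (traceQF K a)
        (QuadraticMap.weightedSumSquares K ![(1 : K), -1])) ∧
    (a₀ ≠ 0 →
      QuadraticMap.Equivalent (traceQF K a)
        (QuadraticMap.weightedSumSquares K
          ![2 * a₀, 2 * a₀ * d * (a₀ ^ 2 - d * a₁ ^ 2)])) := by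
  constructor
  · -- hyperbolic case `a₀ = 0`
    intro h0
    haveI : Nontrivial (QuadAlg K d) := AdjoinRoot.nontrivial _ (by
      rw [degree_X_pow_sub_C two_pos]; decide)
    have ha1 : a₁ ≠ 0 := by
      intro h1
      rw [h0, h1, map_zero, zero_smul, add_zero] at haeq
      exact ha.ne_zero haeq
    have hdet : (1 : K) * (-(a₁ * d)) - (a₁ * d) * 1 ≠ 0 := by
      rw [show (1 : K) * (-(a₁ * d)) - (a₁ * d) * 1 = -(2 * (a₁ * d)) by ring, neg_ne_zero]
      exact mul_ne_zero hK (mul_ne_zero ha1 hd)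
    refine ⟨⟨(QAbasis K d).equivFun.trans (mat2Equiv 1 (a₁ * d) 1 (-(a₁ * d)) hdet), ?_⟩⟩
    intro x
    obtain ⟨x₀, x₁, rfl⟩ : ∃ x₀ x₁, x = algebraMap K (QuadAlg K d) x₀ +
        x₁ • AdjoinRoot.root (X ^ 2 - C d) := ⟨_, _, QA.expand d x⟩
    have hv : (QAbasis K d).equivFun (algebraMap K (QuadAlg K d) x₀ +
        x₁ • AdjoinRoot.root (X ^ 2 - C d)) = ![x₀, x₁] := by
      funext j
      rw [Module.Basis.equivFun_apply]
      exact QA.repr_apply d x₀ x₁ j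
    simp only [LinearMap.toFun_eq_coe, LinearMap.coe_comp, LinearEquiv.coe_coe,
      Function.comp_apply]
    rw [haeq, traceQF_mk, LinearEquiv.trans_apply, hv, mat2Equiv_apply,
      QuadraticMap.weightedSumSquares_apply, Fin.sum_univ_two]
    simp only [Matrix.cons_val_zero, Matrix.cons_val_one, Matrix.head_cons, smul_eq_mul]
    subst h0
    ring
  · -- nondegenerate case `a₀ ≠ 0`
    intro h0
    have hdet : (1 : K) * (1 / a₀) - (a₁ * d / a₀) * 0 ≠ 0 := by
      rw [show (1 : K) * (1 / a₀) - (a₁ * d / a₀) * 0 = a₀⁻¹ by ring]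
      exact inv_ne_zero h0
    refine ⟨⟨(QAbasis K d).equivFun.trans (mat2Equiv 1 (a₁ * d / a₀) 0 (1 / a₀) hdet), ?_⟩⟩
    intro x
    obtain ⟨x₀, x₁, rfl⟩ : ∃ x₀ x₁, x = algebraMap K (QuadAlg K d) x₀ +
        x₁ • AdjoinRoot.root (X ^ 2 - C d) := ⟨_, _, QA.expand d x⟩
    have hv : (QAbasis K d).equivFun (algebraMap K (QuadAlg K d) x₀ +
        x₁ • AdjoinRoot.root (X ^ 2 - C d)) = ![x₀, x₁] := by
      funext j
      rw [Module.Basis.equivFun_apply]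
      exact QA.repr_apply d x₀ x₁ j
    simp only [LinearMap.toFun_eq_coe, LinearMap.coe_comp, LinearEquiv.coe_coe,
      Function.comp_apply]
    rw [haeq, traceQF_mk, LinearEquiv.trans_apply, hv, mat2Equiv_apply,
      QuadraticMap.weightedSumSquares_apply, Fin.sum_univ_two]
    simp only [Matrix.cons_val_zero, Matrix.cons_val_one, Matrix.head_cons, smul_eq_mul]
    field_simp
    ring
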